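/- Suppose x ≥ 0 satisfies x ≤ 6L·(3x)^{2/3} + 80·B^{3/2}·(1 + σ²T + x)^{1/3} for nonnegative constants L, B, σ and positive integer T. Then x ≤ C·(1 + L³ + B^{9/4} + B^{3/2}·σ^{2/3}·T^{1/3}) for some absolute constant C. -/
import Mathlib

open Real

-- u * v^(2/3) ≤ u^3 + v
lemma young23 (u v : ℝ) (hu : 0 ≤ u) (hv : 0 ≤ v) :
    u * v ^ ((2:ℝ)/3) ≤ u ^ 3 + v := by
  rcases le_total (v ^ ((1:ℝ)/3)) u with h | h
  · have hv3 : (0:ℝ) ≤ v ^ ((1:ℝ)/3) := rpow_nonneg hv _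
    have h2 : v ^ ((2:ℝ)/3) ≤ u ^ 2 := by
      have : v ^ ((2:ℝ)/3) = (v ^ ((1:ℝ)/3)) ^ 2 := by
        rw [← Real.rpow_natCast (v ^ ((1:ℝ)/3)) 2, ← Real.rpow_mul hv]
        norm_num
      rw [this]
      exact pow_le_pow_left₀ hv3 h 2
    calc u * v ^ ((2:ℝ)/3) ≤ u * u ^ 2 := by nlinarith [rpow_nonneg hv ((2:ℝ)/3)]
      _ = u ^ 3 := by ring
      _ ≤ u ^ 3 + v := by linarith
  · have h2 : u * v ^ ((2:ℝ)/3) ≤ v ^ ((1:ℝ)/3) * v ^ ((2:ℝ)/3) := by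
      exact mul_le_mul_of_nonneg_right h (rpow_nonneg hv _)
    have h3 : v ^ ((1:ℝ)/3) * v ^ ((2:ℝ)/3) = v := by
      rw [← Real.rpow_add' hv (by norm_num)]
      norm_num
    nlinarith [pow_nonneg hu 3]

-- u * v^(1/3) ≤ u^(3/2) + v
lemma young13 (u v : ℝ) (hu : 0 ≤ u) (hv : 0 ≤ v) :
    u * v ^ ((1:ℝ)/3) ≤ u ^ ((3:ℝ)/2) + v := by
  rcases le_total u (v ^ ((2:ℝ)/3)) with h | h
  · have h2 : u * v ^ ((1:ℝ)/3) ≤ v ^ ((2:ℝ)/3) * v ^ ((1:ℝ)/3) :=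
      mul_le_mul_of_nonneg_right h (rpow_nonneg hv _)
    have h3 : v ^ ((2:ℝ)/3) * v ^ ((1:ℝ)/3) = v := by
      rw [← Real.rpow_add' hv (by norm_num)]; norm_num
    nlinarith [rpow_nonneg hu ((3:ℝ)/2)]
  · have h1 : v ^ ((1:ℝ)/3) ≤ u ^ ((1:ℝ)/2) := by
      have : v ^ ((1:ℝ)/3) = (v ^ ((2:ℝ)/3)) ^ ((1:ℝ)/2) := by
        rw [← Real.rpow_mul hv]; norm_num
      rw [this]
      exact Real.rpow_le_rpow (rpow_nonneg hv _) h (by norm_num)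
    have h2 : u * v ^ ((1:ℝ)/3) ≤ u * u ^ ((1:ℝ)/2) :=
      mul_le_mul_of_nonneg_left h1 hu
    have h3 : u * u ^ ((1:ℝ)/2) = u ^ ((3:ℝ)/2) := by
      nth_rw 1 [← Real.rpow_one u]
      rw [← Real.rpow_add' hu (by norm_num)]; norm_num
    linarith
-- cube-root subadditivity
lemma cbrt_add (a b : ℝ) (ha : 0 ≤ a) (hb : 0 ≤ b) :
    (a + b) ^ ((1:ℝ)/3) ≤ a ^ ((1:ℝ)/3) + b ^ ((1:ℝ)/3) := by
  have h := NNReal.rpow_add_le_add_rpow a.toNNReal b.toNNReal (by norm_num : (0:ℝ) ≤ 1/3) (by norm_num)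
  have := NNReal.coe_le_coe.mpr h
  push_cast [NNReal.coe_rpow, Real.coe_toNNReal a ha, Real.coe_toNNReal b hb] at this
  convert this using 2 <;> norm_num

set_option maxHeartbeats 1000000 in
theorem stmt_8 : ∃ C : ℝ, 0 < C ∧ ∀ (x L B σ : ℝ) (T : ℕ),
    0 ≤ x → 0 ≤ L → 0 ≤ B → 0 ≤ σ → 0 < T →
    x ≤ 6 * L * (3 * x) ^ ((2:ℝ)/3)
        + 80 * B ^ ((3:ℝ)/2) * (1 + σ ^ 2 * T + x) ^ ((1:ℝ)/3) →
    x ≤ C * (1 + L ^ 3 + B ^ ((9:ℝ)/4)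
        + B ^ ((3:ℝ)/2) * σ ^ ((2:ℝ)/3) * (T:ℝ) ^ ((1:ℝ)/3)) := by
  refine ⟨10 ^ 7, by norm_num, fun x L B σ T hx hL hB hσ hT h => ?_⟩
  have hT0 : (0:ℝ) ≤ (T:ℝ) := Nat.cast_nonneg T
  -- numeric rpow evaluations
  have h64 : (64:ℝ) ^ ((2:ℝ)/3) = 16 := by
    rw [show (64:ℝ) = (4:ℝ) ^ (3:ℕ) by norm_num, ← Real.rpow_natCast (4:ℝ) 3,
      ← Real.rpow_mul (by norm_num)]
    rw [show ((3:ℕ):ℝ) * (2/3) = ((2:ℕ):ℝ) by push_cast; norm_num, Real.rpow_natCast]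
    norm_num
  have h8 : (8:ℝ) ^ ((1:ℝ)/3) = 2 := by
    rw [show (8:ℝ) = (2:ℝ) ^ (3:ℕ) by norm_num, ← Real.rpow_natCast (2:ℝ) 3,
      ← Real.rpow_mul (by norm_num)]
    rw [show ((3:ℕ):ℝ) * (1/3) = ((1:ℕ):ℝ) by push_cast; norm_num, Real.rpow_natCast]
    norm_num
  have h169 : (169:ℝ) ^ ((3:ℝ)/2) = 2197 := by
    rw [show (169:ℝ) = (13:ℝ) ^ (2:ℕ) by norm_num, ← Real.rpow_natCast (13:ℝ) 2,
      ← Real.rpow_mul (by norm_num)]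
    rw [show ((2:ℕ):ℝ) * (3/2) = ((3:ℕ):ℝ) by push_cast; norm_num, Real.rpow_natCast]
    norm_num
  -- Term 1: 6L(3x)^{2/3} ≤ 884736 L^3 + (3/64) x
  have ht1 : 6 * L * (3 * x) ^ ((2:ℝ)/3) ≤ 884736 * L ^ 3 + 3 / 64 * x := by
    have e1 : (3 * x) ^ ((2:ℝ)/3) = 16 * (3 * x / 64) ^ ((2:ℝ)/3) := by
      rw [← h64, ← Real.mul_rpow (by norm_num) (by positivity)]
      congr 1; ring
    have := young23 (96 * L) (3 * x / 64) (by positivity) (by positivity)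
    rw [e1]
    nlinarith [this]
  -- cube root splitting
  have hy : (1 + σ ^ 2 * T + x) ^ ((1:ℝ)/3)
      ≤ 1 + σ ^ ((2:ℝ)/3) * (T:ℝ) ^ ((1:ℝ)/3) + x ^ ((1:ℝ)/3) := by
    have a1 : (1 + σ ^ 2 * T + x) ^ ((1:ℝ)/3)
        ≤ (1 + σ ^ 2 * T) ^ ((1:ℝ)/3) + x ^ ((1:ℝ)/3) :=
      cbrt_add _ _ (by positivity) hx
    have a2 : (1 + σ ^ 2 * (T:ℝ)) ^ ((1:ℝ)/3)
        ≤ 1 + (σ ^ 2 * T) ^ ((1:ℝ)/3) := by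
      have := cbrt_add 1 (σ ^ 2 * T) (by norm_num) (by positivity)
      simpa using this
    have a3 : (σ ^ 2 * (T:ℝ)) ^ ((1:ℝ)/3) = σ ^ ((2:ℝ)/3) * (T:ℝ) ^ ((1:ℝ)/3) := by
      rw [Real.mul_rpow (by positivity) hT0, ← Real.rpow_natCast σ 2,
        ← Real.rpow_mul hσ]
      norm_num
    rw [a3] at a2
    linarith
  -- B^{3/2} ≤ 1 + B^{9/4}
  have hB32 : B ^ ((3:ℝ)/2) ≤ 1 + B ^ ((9:ℝ)/4) := by
    rcases le_total B 1 with hb | hb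
    · have := Real.rpow_le_one hB hb (by norm_num : (0:ℝ) ≤ 3/2)
      have h2 : (0:ℝ) ≤ B ^ ((9:ℝ)/4) := Real.rpow_nonneg hB _
      linarith
    · have := Real.rpow_le_rpow_of_exponent_le hb (by norm_num : (3:ℝ)/2 ≤ 9/4)
      linarith
  -- Term with x^{1/3}: 80 B^{3/2} x^{1/3} ≤ 2197 B^{9/4} + x/8
  have ht3 : 80 * B ^ ((3:ℝ)/2) * x ^ ((1:ℝ)/3)
      ≤ 2197 * B ^ ((9:ℝ)/4) + x / 8 := by
    have e1 : x ^ ((1:ℝ)/3) = 2 * (x / 8) ^ ((1:ℝ)/3) := by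
      rw [← h8, ← Real.mul_rpow (by norm_num) (by positivity)]
      congr 1; ring
    have hy2 := young13 (160 * B ^ ((3:ℝ)/2)) (x / 8) (by positivity) (by positivity)
    have hmono : (160 * B ^ ((3:ℝ)/2)) ^ ((3:ℝ)/2) ≤ (169 * B ^ ((3:ℝ)/2)) ^ ((3:ℝ)/2) := by
      apply Real.rpow_le_rpow (by positivity) _ (by norm_num)
      nlinarith [Real.rpow_nonneg hB ((3:ℝ)/2)]
    have heval : (169 * B ^ ((3:ℝ)/2)) ^ ((3:ℝ)/2) = 2197 * B ^ ((9:ℝ)/4) := by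
      rw [Real.mul_rpow (by norm_num) (Real.rpow_nonneg hB _), h169, ← Real.rpow_mul hB]
      norm_num
    rw [e1]
    nlinarith [hy2, hmono, heval]
  have hBσT : (0:ℝ) ≤ B ^ ((3:ℝ)/2) * σ ^ ((2:ℝ)/3) * (T:ℝ) ^ ((1:ℝ)/3) := by positivity
  have hB32n : (0:ℝ) ≤ B ^ ((3:ℝ)/2) := Real.rpow_nonneg hB _
  have hσT : (0:ℝ) ≤ σ ^ ((2:ℝ)/3) * (T:ℝ) ^ ((1:ℝ)/3) := by positivity
  have hB94 : (0:ℝ) ≤ B ^ ((9:ℝ)/4) := Real.rpow_nonneg hB _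
  have hL3 : (0:ℝ) ≤ L ^ 3 := by positivity
  -- combine term 2
  have ht2 : 80 * B ^ ((3:ℝ)/2) * (1 + σ ^ 2 * T + x) ^ ((1:ℝ)/3)
      ≤ 80 + 80 * B ^ ((9:ℝ)/4) + 80 * (B ^ ((3:ℝ)/2) * σ ^ ((2:ℝ)/3) * (T:ℝ) ^ ((1:ℝ)/3))
        + 2197 * B ^ ((9:ℝ)/4) + x / 8 := by
    have step : 80 * B ^ ((3:ℝ)/2) * (1 + σ ^ 2 * T + x) ^ ((1:ℝ)/3)
        ≤ 80 * B ^ ((3:ℝ)/2) * (1 + σ ^ ((2:ℝ)/3) * (T:ℝ) ^ ((1:ℝ)/3) + x ^ ((1:ℝ)/3)) := by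
      apply mul_le_mul_of_nonneg_left hy (by positivity)
    have expand : 80 * B ^ ((3:ℝ)/2) * (1 + σ ^ ((2:ℝ)/3) * (T:ℝ) ^ ((1:ℝ)/3) + x ^ ((1:ℝ)/3))
        = 80 * B ^ ((3:ℝ)/2)
          + 80 * (B ^ ((3:ℝ)/2) * σ ^ ((2:ℝ)/3) * (T:ℝ) ^ ((1:ℝ)/3))
          + 80 * B ^ ((3:ℝ)/2) * x ^ ((1:ℝ)/3) := by ring
    rw [expand] at step
    linarith [ht3, hB32]
  linarith [ht1, ht2, h, hL3, hB94, hBσT]
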